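/- Let X_1(k),...,X_{L_k}(k), for k = 1,...,m, be mutually independent random variables where each X_j(k) is uniformly distributed on {0,1,...,k}, and let S_L = Σ_{k=1}^m Σ_{j=1}^{L_k} X_j(k). Then for every integer a ≥ 0, P(S_L = a) = (Σ_{j_1+...+j_m = a} ∏_{i=1}^m C(L_i+j_{i+1}, j_i)) / (∏_{i=1}^m (i+1)^{L_i}), where the sum ranges over nonnegative integer vectors (j_1,...,j_m) with j_1+...+j_m = a and j_{m+1}=0. Moreover E(S_L) = (1/2) Σ_{i=1}^m i·L_i and Var(S_L) = (1/12) Σ_{i=1}^m i(i+2)·L_i. -/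

import Mathlib

open MeasureTheory ProbabilityTheory Filter Finset

noncomputable section

/-- The Gaussian (`q`-)binomial coefficient `[n choose k]_q`, as a polynomial in `q`
with natural number coefficients. -/
def qBinom : ℕ → ℕ → Polynomial ℕ
  | _, 0 => 1
  | 0, _ + 1 => 0
  | n + 1, k + 1 => qBinom n k + Polynomial.X ^ (k + 1) * qBinom n (k + 1)

/-- Evaluation of a polynomial with natural number coefficients at a real argument. -/
def evalR (p : Polynomial ℕ) (x : ℝ) : ℝ := (p.map (Nat.castRingHom ℝ)).eval x

/-- `nx m j i = j (i+1)`, with the convention `j (m+1) = 0`. -/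
def nx (m : ℕ) (j : ℕ → ℕ) (i : ℕ) : ℕ := if i + 1 ≤ m then j (i + 1) else 0

/-- `j` is `L`-compatible (paper-indexed by `1,…,m`). -/
def Compatible (m : ℕ) (L j : ℕ → ℕ) : Prop :=
  ∀ i ∈ Finset.Icc 1 m, j i ≤ L i + nx m j i

/-- The numerator polynomial `∏_{i=1}^m [L_i + j_{i+1} choose j_i]_q` of `F(L,j)(q)`. -/
def FPol (m : ℕ) (L j : ℕ → ℕ) : Polynomial ℕ :=
  ∏ i ∈ Finset.Icc 1 m, qBinom (L i + nx m j i) (j i)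

/-- The normalizing constant `∏_{i=1}^m C(L_i + j_{i+1}, j_i)`. -/
def FNorm (m : ℕ) (L j : ℕ → ℕ) : ℕ :=
  ∏ i ∈ Finset.Icc 1 m, (L i + nx m j i).choose (j i)

/-- `Q(L,j) = Σ_{i=1}^m j_i (j_i + Σ_{ℓ=1}^{i-1} L_ℓ)`. -/
def Qstat (m : ℕ) (L j : ℕ → ℕ) : ℕ :=
  ∑ i ∈ Finset.Icc 1 m, j i * (j i + ∑ l ∈ Finset.Icc 1 (i - 1), L l)

/-- Paper-indexed (indices `1,…,m`) extension of a `Fin m`-vector of naturals, by zero. -/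
def extN (m : ℕ) (j : Fin m → ℕ) : ℕ → ℕ := fun i =>
  if h : 1 ≤ i ∧ i ≤ m then j ⟨i - 1, by omega⟩ else 0

/-- Paper-indexed (indices `1,…,m`) extension of a `Fin m`-vector of reals, by zero. -/
def extR (m : ℕ) (a : Fin m → ℝ) : ℕ → ℝ := fun i =>
  if h : 1 ≤ i ∧ i ≤ m then a ⟨i - 1, by omega⟩ else 0

/-- The modified `q`-supernomial `T̃(L,a)(q)`. -/
def Tsuper (m : ℕ) (L : ℕ → ℕ) (a : ℕ) : Polynomial ℕ :=
  ∑ j ∈ Finset.Nat.antidiagonalTuple m a,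
    Polynomial.X ^ Qstat m L (extN m j) * FPol m L (extN m j)

/-- `T̃(L)(q) = Σ_{a=0}^{L_1+⋯+L_m} T̃(L,a)(q)`. -/
def TsuperTot (m : ℕ) (L : ℕ → ℕ) : Polynomial ℕ :=
  ∑ a ∈ Finset.range (∑ i ∈ Finset.Icc 1 m, L i + 1), Tsuper m L a

/-- `e(L,j) = E(Inv(L,j)) = (1/2) Σ_{i=1}^m (L_i + j_{i+1} - j_i) j_i`. -/
def eStat (m : ℕ) (L j : ℕ → ℕ) : ℝ :=
  (1 / 2) * ∑ i ∈ Finset.Icc 1 m, (((L i : ℝ) + (nx m j i : ℕ)) - (j i : ℕ)) * (j i : ℕ)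

/-- `v(a,b) = (1/12) Σ_{i=1}^m (a_i + b_{i+1} - b_i) b_i (a_i + b_{i+1})`. -/
def vab (m : ℕ) (a b : ℕ → ℝ) : ℝ :=
  (1 / 12) * ∑ i ∈ Finset.Icc 1 m, (a i + b (i + 1) - b i) * b i * (a i + b (i + 1))

/-- The weight of the unrestricted mixing distribution. -/
def mixW (m : ℕ) (L j : ℕ → ℕ) : ℝ :=
  (FNorm m L j : ℝ) / ∏ i ∈ Finset.Icc 1 m, ((i : ℝ) + 1) ^ L i

/-- Convergence in distribution (weak convergence of the laws). -/
def TendstoInDist {Ω : Type*} [MeasureSpace Ω] {E : Type*} [MeasurableSpace E]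
    [TopologicalSpace E] (X : ℕ → Ω → E) (μ : Measure E) : Prop :=
  ∀ f : BoundedContinuousFunction E ℝ,
    Filter.Tendsto (fun N => ∫ ω, f (X N ω)) Filter.atTop (nhds (∫ y, f y ∂μ))

/-- The standard Gaussian measure on `ι → ℝ`. -/
def stdGaussianPi (ι : Type*) [Fintype ι] : Measure (ι → ℝ) :=
  Measure.pi fun _ => gaussianReal 0 1

/-- The centered multivariate normal distribution `N(0,S)` on `ι → ℝ`, for a positive
semidefinite covariance matrix `S`. -/
def mvNormal {ι : Type*} [Fintype ι] [DecidableEq ι] (S : Matrix ι ι ℝ)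
    (hS : S.PosSemidef) : Measure (ι → ℝ) :=
  (stdGaussianPi ι).map fun x =>
    ((hS.1.eigenvectorUnitary : Matrix ι ι ℝ) *
        Matrix.diagonal ((RCLike.ofReal : ℝ → ℝ) ∘ (√·) ∘ hS.1.eigenvalues) *
        (star hS.1.eigenvectorUnitary : Matrix ι ι ℝ)).mulVec x

/-- The covariance of two real random variables (with respect to `volume`);
the variance of `X` is `covar X X`. -/
def covar {Ω : Type*} [MeasureSpace Ω] (X Y : Ω → ℝ) : ℝ :=
  ∫ ω, (X ω - ∫ ω', X ω') * (Y ω - ∫ ω', Y ω')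

/-- The quadratic function `q(x,v) = xᵀMx + v·xᵀ`. -/
def qform {m : ℕ} (M : Matrix (Fin m) (Fin m) ℝ) (v x : Fin m → ℝ) : ℝ :=
  dotProduct x (M.mulVec x) + dotProduct v x

/-- The quadratic form `c S cᵀ` of a `Fin m`-indexed matrix at a paper-indexed vector `c`. -/
def quadForm {m : ℕ} (S : Matrix (Fin m) (Fin m) ℝ) (c : ℕ → ℝ) : ℝ :=
  ∑ i : Fin m, ∑ j : Fin m, c ((i : ℕ) + 1) * S i j * c ((j : ℕ) + 1)

/-- `c_i = a_i + b_{i+1} + b_{i-1} - 2 b_i` (paper-indexed). -/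
def cP (a b : ℕ → ℝ) (i : ℕ) : ℝ := a i + b (i + 1) + b (i - 1) - 2 * b i

/-- `f_i = a_i + b_{i+1} + b_{i-1} + 2 b_i + 2 Σ_{ℓ=1}^{i-1} a_ℓ` (paper-indexed). -/
def fP (a b : ℕ → ℝ) (i : ℕ) : ℝ :=
  a i + b (i + 1) + b (i - 1) + 2 * b i + 2 * ∑ l ∈ Finset.Icc 1 (i - 1), a l

/-- `b_i = i Σ_{ℓ=i}^m a_ℓ/(ℓ+1)` (paper-indexed). -/
def bPaper (m : ℕ) (a : Fin m → ℝ) (i : ℕ) : ℝ :=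
  (i : ℝ) * ∑ l ∈ Finset.Icc i m, extR m a l / ((l : ℝ) + 1)

/-- The asymptotic covariance matrix of the mixing distribution in the unrestricted case:
`Σ_{i,j} = min(i,j) Σ_{k=max(i,j)}^m a_k/(k+1) - ij Σ_{k=max(i,j)}^m a_k/(k+1)²`. -/
def SigUnr (m : ℕ) (a : Fin m → ℝ) : Matrix (Fin m) (Fin m) ℝ := fun i j =>
  ((min ((i : ℕ) + 1) ((j : ℕ) + 1) : ℕ) : ℝ) *
      (∑ k ∈ Finset.Icc (max ((i : ℕ) + 1) ((j : ℕ) + 1)) m, extR m a k / ((k : ℝ) + 1)) -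
    (((i : ℕ) + 1 : ℝ) * ((j : ℕ) + 1 : ℝ)) *
      ∑ k ∈ Finset.Icc (max ((i : ℕ) + 1) ((j : ℕ) + 1)) m, extR m a k / ((k : ℝ) + 1) ^ 2

/-- `σ²(a) = (1/12) Σ_{k=1}^m k(k+2) a_k`. -/
def sigSq (m : ℕ) (a : Fin m → ℝ) : ℝ :=
  (1 / 12) * ∑ k ∈ Finset.Icc 1 m, (k : ℝ) * ((k : ℝ) + 2) * extR m a k

/-- `c(i) = Σ_{k=i}^m ((k+1-i)/(k+1)) a_k` (paper-indexed). -/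
def cRes (m : ℕ) (a : Fin m → ℝ) (i : ℕ) : ℝ :=
  ∑ k ∈ Finset.Icc i m, (((k : ℝ) + 1 - (i : ℝ)) / ((k : ℝ) + 1)) * extR m a k

/-- The asymptotic covariance matrix of the mixing distribution in the central
restricted case. -/
def SigRes (m : ℕ) (a : Fin m → ℝ) : Matrix (Fin m) (Fin m) ℝ := fun i j =>
  SigUnr m a i j -
    ((((i : ℕ) + 1 : ℝ) * ((j : ℕ) + 1 : ℝ)) / (2 * sigSq m a)) *
      cRes m a ((i : ℕ) + 1) * cRes m a ((j : ℕ) + 1)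

/-- `X` has probability generating function `p(q)/p(1)`. -/
def pgfLaw {Ω : Type*} [MeasureSpace Ω] (X : Ω → ℕ) (p : Polynomial ℕ) : Prop :=
  ∀ k : ℕ, volume {ω | X ω = k} = ENNReal.ofReal ((p.coeff k : ℝ) / ((p.eval 1 : ℕ) : ℝ))

/-- `J` has the mixing distribution `P(J=j) = ∏ C(L_i+j_{i+1}, j_i) / ∏ (i+1)^{L_i}`. -/
def mixLaw {Ω : Type*} [MeasureSpace Ω] (m : ℕ) (L : ℕ → ℕ) (J : Ω → Fin m → ℕ) : Prop :=
  ∀ j : Fin m → ℕ, volume {ω | J ω = j} = ENNReal.ofReal (mixW m L (extN m j))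

/-- Conditionally on `J = j`, the random variable `Y` is distributed as `Inv(L,j)`. -/
def condInvLaw {Ω : Type*} [MeasureSpace Ω] (m : ℕ) (L : ℕ → ℕ)
    (J : Ω → Fin m → ℕ) (Y : Ω → ℕ) : Prop :=
  ∀ (j : Fin m → ℕ) (k : ℕ),
    volume {ω | J ω = j ∧ Y ω = k} =
      volume {ω | J ω = j} *
        ENNReal.ofReal (((FPol m L (extN m j)).coeff k : ℝ) / (FNorm m L (extN m j) : ℝ))

/-- `J` is supported on `L`-compatible vectors. -/
def compatSupport {Ω : Type*} [MeasureSpace Ω] (m : ℕ) (L : ℕ → ℕ)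
    (J : Ω → Fin m → ℕ) : Prop :=
  volume {ω | Compatible m L (extN m (J ω))} = 1

/-- The probability of the occupancy pattern `β` for the independent uniform
multinomial occupancy statistics of words of lengths `L_1, …, L_m`. -/
def multW (m : ℕ) (L : ℕ → ℕ) (β : ℕ → ℕ → ℕ) : ℝ :=
  ∏ k ∈ Finset.Icc 1 m,
    if ∑ i ∈ Finset.range (k + 1), β k i = L k then
      (Nat.multinomial (Finset.range (k + 1)) (β k) : ℝ) / ((k : ℝ) + 1) ^ L k
    else 0

/-- The event that the occupancy field `B` matches the pattern `β` on all relevant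
coordinates. -/
def occEvent (m : ℕ) {Ω : Type*} (B : Ω → ℕ → ℕ → ℕ) (β : ℕ → ℕ → ℕ) : Set Ω :=
  {ω | ∀ k ∈ Finset.Icc 1 m, ∀ i ∈ Finset.range (k + 1), B ω k i = β k i}

/-- `B` is an independent family of uniform multinomial occupancy statistics. -/
def multLaw {Ω : Type*} [MeasureSpace Ω] (m : ℕ) (L : ℕ → ℕ) (B : Ω → ℕ → ℕ → ℕ) : Prop :=
  ∀ β : ℕ → ℕ → ℕ, volume (occEvent m B β) = ENNReal.ofReal (multW m L β)

/-- The weighted sum `Σ_{k=1}^m Σ_{i=0}^k i·B_i(k)` of an occupancy pattern. -/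
def wSum (m : ℕ) (B : ℕ → ℕ → ℕ) : ℕ :=
  ∑ k ∈ Finset.Icc 1 m, ∑ i ∈ Finset.range (k + 1), i * B k i

/-- The asymptotic covariance matrix `Σ_{i,j}(k,ℓ)` of the conditioned occupancy
statistic. -/
def SigCond (m : ℕ) (a : Fin m → ℝ) :
    Matrix ((k : Fin m) × Fin ((k : ℕ) + 2)) ((k : Fin m) × Fin ((k : ℕ) + 2)) ℝ :=
  fun p q =>
    (if (p.1 : ℕ) = (q.1 : ℕ) then
        a p.1 * ((if (p.2 : ℕ) = (q.2 : ℕ) then 1 else 0) / ((p.1 : ℕ) + 2 : ℝ) -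
          1 / ((p.1 : ℕ) + 2 : ℝ) ^ 2)
      else 0) -
    a p.1 * a q.1 * ((((p.1 : ℕ) + 1 : ℝ)) - 2 * ((p.2 : ℕ) : ℝ)) *
        ((((q.1 : ℕ) + 1 : ℝ)) - 2 * ((q.2 : ℕ) : ℝ)) /
      (4 * ((p.1 : ℕ) + 2 : ℝ) * ((q.1 : ℕ) + 2 : ℝ) * sigSq m a)

noncomputable def hGeom (k : ℕ) : Polynomial ℕ := ∑ v ∈ Finset.range (k+1), Polynomial.X ^ v

lemma hGeom_zero : hGeom 0 = 1 := by simp [hGeom]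

lemma hGeom_succ (k : ℕ) : hGeom (k+1) = Polynomial.X * hGeom k + 1 := by
  simp [hGeom, geom_sum_succ]

lemma sum_adt_snoc {M : Type*} [AddCommMonoid M] (m a : ℕ) (f : (Fin (m+1) → ℕ) → M) :
    ∑ j ∈ Finset.Nat.antidiagonalTuple (m+1) a, f j =
      ∑ t ∈ Finset.range (a+1), ∑ j' ∈ Finset.Nat.antidiagonalTuple m (a - t), f (Fin.snoc j' t) := by
  rw [← Finset.sum_sigma (Finset.range (a+1)) (fun t => Finset.Nat.antidiagonalTuple m (a - t))
    (fun p => f (Fin.snoc p.2 p.1))]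
  refine (Finset.sum_bij (fun p _ => (Fin.snoc p.2 p.1 : Fin (m+1) → ℕ)) ?_ ?_ ?_ ?_).symm
  · rintro ⟨t, j'⟩ hp
    simp only [Finset.mem_sigma, Finset.mem_range, Finset.Nat.mem_antidiagonalTuple] at hp ⊢
    rw [Fin.sum_univ_castSucc]
    simp only [Fin.snoc_castSucc, Fin.snoc_last]
    omega
  · rintro ⟨t, j'⟩ hp ⟨s, j''⟩ hq h
    have h1 : t = s := by
      have := congrFun h (Fin.last m); simpa using this
    have h2 : j' = j'' := by
      funext i
      have := congrFun h i.castSucc; simpa using this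
    subst h1; subst h2; rfl
  · intro j hj
    simp only [Finset.Nat.mem_antidiagonalTuple] at hj
    have ht : j (Fin.last m) ≤ a := by
      rw [← hj]; exact Finset.single_le_sum (f := fun i => j i) (fun _ _ => Nat.zero_le _) (Finset.mem_univ _)
    refine ⟨⟨j (Fin.last m), Fin.init j⟩, ?_, ?_⟩
    · simp only [Finset.mem_sigma, Finset.mem_range, Finset.Nat.mem_antidiagonalTuple]
      refine ⟨by omega, ?_⟩
      have h3 := Fin.sum_univ_castSucc (f := j)
      rw [hj] at h3
      simp only [Fin.init]
      omega
    · exact Fin.snoc_init_self j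
  · rintro ⟨t, j'⟩ hp; rfl

lemma extN_snoc (m t : ℕ) (j' : Fin m → ℕ) (i : ℕ) :
    extN (m+1) (Fin.snoc j' t) i = if i = m+1 then t else extN m j' i := by
  unfold extN
  by_cases hi : i = m + 1
  · subst hi
    rw [dif_pos ⟨by omega, le_refl _⟩, if_pos rfl]
    have h : (⟨m + 1 - 1, by omega⟩ : Fin (m+1)) = Fin.last m := by ext; simp
    rw [h, Fin.snoc_last]
  · rw [if_neg hi]
    by_cases h : 1 ≤ i ∧ i ≤ m
    · rw [dif_pos ⟨h.1, by omega⟩, dif_pos h]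
      have h2 : (⟨i - 1, by omega⟩ : Fin (m+1)) = Fin.castSucc ⟨i - 1, by omega⟩ := by ext; simp
      rw [h2, Fin.snoc_castSucc]
    · rw [dif_neg (by omega), dif_neg h]

lemma FNorm_snoc (m : ℕ) (L : ℕ → ℕ) (t : ℕ) (j' : Fin m → ℕ) :
    FNorm (m+1) L (extN (m+1) (Fin.snoc j' t)) =
      (L (m+1)).choose t * FNorm m (fun k => L k + if k = m then t else 0) (extN m j') := by
  unfold FNorm
  rw [Finset.prod_Icc_succ_top (by omega)]
  have hlast : (L (m+1) + nx (m+1) (extN (m+1) (Fin.snoc j' t)) (m+1)).choose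
      (extN (m+1) (Fin.snoc j' t) (m+1)) = (L (m+1)).choose t := by
    rw [extN_snoc, if_pos rfl]
    congr 1
    unfold nx
    rw [if_neg (by omega), add_zero]
  have hrest : ∏ i ∈ Finset.Icc 1 m, (L i + nx (m+1) (extN (m+1) (Fin.snoc j' t)) i).choose
      (extN (m+1) (Fin.snoc j' t) i)
      = ∏ i ∈ Finset.Icc 1 m, ((fun k => L k + if k = m then t else 0) i + nx m (extN m j') i).choose
        (extN m j' i) := by
    refine Finset.prod_congr rfl fun i hi => ?_
    simp only [Finset.mem_Icc] at hi
    have hnx : nx (m+1) (extN (m+1) (Fin.snoc j' t)) i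
        = (if i = m then t else 0) + nx m (extN m j') i := by
      unfold nx
      rw [if_pos (by omega : i + 1 ≤ m + 1), extN_snoc]
      by_cases him : i = m
      · subst him
        rw [if_pos rfl, if_pos rfl, if_neg (by omega), add_zero]
      · rw [if_neg (by omega), if_neg him, if_pos (by omega), zero_add]
    rw [extN_snoc, if_neg (by omega), hnx]
    congr 1
    ring
  rw [hlast, hrest, mul_comm]

lemma polyId (m : ℕ) : ∀ (L : ℕ → ℕ) (a : ℕ),
    (∏ k ∈ Finset.Icc 1 m, hGeom k ^ L k).coeff a
      = ∑ j ∈ Finset.Nat.antidiagonalTuple m a, FNorm m L (extN m j) := by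
  induction m with
  | zero =>
    intro L a
    rw [Finset.Icc_eq_empty (by omega), Finset.prod_empty]
    cases a with
    | zero => simp [FNorm, Finset.Icc_eq_empty (show ¬ (1:ℕ) ≤ 0 by omega)]
    | succ a => simp [Polynomial.coeff_one, Nat.succ_ne_zero]
  | succ m ih =>
    intro L a
    rw [Finset.prod_Icc_succ_top (by omega), hGeom_succ, add_pow]
    rw [Finset.mul_sum, Polynomial.finset_sum_coeff]
    have hterm : ∀ t, ((∏ k ∈ Finset.Icc 1 m, hGeom k ^ L k) *
        ((Polynomial.X * hGeom m) ^ t * 1 ^ (L (m+1) - t) * ((L (m+1)).choose t : Polynomial ℕ))).coeff a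
        = if t ≤ a then (L (m+1)).choose t *
            ∑ j' ∈ Finset.Nat.antidiagonalTuple m (a - t),
              FNorm m (fun k => L k + if k = m then t else 0) (extN m j') else 0 := by
      intro t
      have hre : (∏ k ∈ Finset.Icc 1 m, hGeom k ^ L k) *
          ((Polynomial.X * hGeom m) ^ t * 1 ^ (L (m+1) - t) * ((L (m+1)).choose t : Polynomial ℕ))
          = ((L (m+1)).choose t : Polynomial ℕ) *
            (((∏ k ∈ Finset.Icc 1 m, hGeom k ^ L k) * hGeom m ^ t) * Polynomial.X ^ t) := by
        ring
      rw [hre, Polynomial.coeff_natCast_mul, Polynomial.coeff_mul_X_pow']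
      have hq : (∏ k ∈ Finset.Icc 1 m, hGeom k ^ L k) * hGeom m ^ t
          = ∏ k ∈ Finset.Icc 1 m, hGeom k ^ (L k + if k = m then t else 0) := by
        have he : ∀ k, hGeom k ^ (L k + if k = m then t else 0)
            = hGeom k ^ L k * (if k = m then hGeom k ^ t else 1) := by
          intro k; by_cases h : k = m <;> simp [h, pow_add]
        simp only [he]
        rw [Finset.prod_mul_distrib, Finset.prod_ite_eq']
        by_cases hm : m = 0
        · subst hm
          rw [if_neg (by simp), Finset.Icc_eq_empty (by omega)]
          simp [hGeom_zero]
        · rw [if_pos (by simp only [Finset.mem_Icc]; omega)]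
      by_cases hta : t ≤ a
      · rw [if_pos hta, if_pos hta, hq, ih]
        push_cast
        ring
      · rw [if_neg hta, if_neg hta, mul_zero]
    simp only [hterm]
    rw [sum_adt_snoc]
    have hrhs : ∀ t ∈ Finset.range (a+1),
        ∑ j' ∈ Finset.Nat.antidiagonalTuple m (a - t), FNorm (m+1) L (extN (m+1) (Fin.snoc j' t))
        = if t ≤ a then (L (m+1)).choose t *
            ∑ j' ∈ Finset.Nat.antidiagonalTuple m (a - t),
              FNorm m (fun k => L k + if k = m then t else 0) (extN m j') else 0 := by
      intro t ht
      rw [if_pos (by simp only [Finset.mem_range] at ht; omega), Finset.mul_sum]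
      exact Finset.sum_congr rfl fun j' _ => FNorm_snoc m L t j'
    rw [Finset.sum_congr rfl hrhs]
    have key : ∀ g : ℕ → ℕ, (∀ t, a < t → g t = 0) → (∀ t, L (m+1) < t → g t = 0) →
        ∑ t ∈ Finset.range (L (m+1) + 1), g t = ∑ t ∈ Finset.range (a + 1), g t := by
      intro g hga hgL
      have e1 : ∑ t ∈ Finset.range (L (m+1) + 1), g t = ∑ t ∈ Finset.range (L (m+1) + a + 2), g t :=
        Finset.sum_subset (by intro x hx; simp only [Finset.mem_range] at hx ⊢; omega)
          (fun t _ ht => hgL t (by simp only [Finset.mem_range, not_lt] at ht; omega))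
      have e2 : ∑ t ∈ Finset.range (a + 1), g t = ∑ t ∈ Finset.range (L (m+1) + a + 2), g t :=
        Finset.sum_subset (by intro x hx; simp only [Finset.mem_range] at hx ⊢; omega)
          (fun t _ ht => hga t (by simp only [Finset.mem_range, not_lt] at ht; omega))
      rw [e1, ← e2]
    refine key _ (fun t ht => by rw [if_neg (by omega)]) (fun t ht => ?_)
    by_cases hta : t ≤ a
    · rw [if_pos hta, Nat.choose_eq_zero_of_lt ht, zero_mul]
    · rw [if_neg hta]

def Pfin (m : ℕ) (L : ℕ → ℕ) : Finset ((_ : ℕ) × ℕ) :=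
  (Finset.Icc 1 m).sigma (fun k => Finset.Icc 1 (L k))

def tIdx (m : ℕ) (L : ℕ → ℕ) : ↥(Pfin m L) → Finset ℕ := fun p => Finset.range (p.1.1 + 1)

def totG (m : ℕ) (L : ℕ → ℕ) (g : ↥(Pfin m L) → ℕ) : ℕ := ∑ p : ↥(Pfin m L), g p

lemma prod_Pfin {M : Type*} [CommMonoid M] (m : ℕ) (L : ℕ → ℕ) (f : ℕ → M) :
    ∏ p : ↥(Pfin m L), f p.1.1 = ∏ k ∈ Finset.Icc 1 m, f k ^ L k := by
  rw [Finset.univ_eq_attach, Finset.prod_attach (Pfin m L) (fun p => f p.1), Pfin,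
    Finset.prod_sigma]
  refine Finset.prod_congr rfl fun k _ => ?_
  have h : ∀ n : ℕ, ∏ _s ∈ Finset.Icc 1 n, f k = f k ^ n := fun n => by
    rw [Finset.prod_const, Nat.card_Icc]; simp
  exact h (L k)

lemma sum_Pfin (m : ℕ) (L : ℕ → ℕ) (f : ℕ → ℝ) :
    ∑ p : ↥(Pfin m L), f p.1.1 = ∑ k ∈ Finset.Icc 1 m, (L k : ℝ) * f k := by
  rw [Finset.univ_eq_attach, Finset.sum_attach (Pfin m L) (fun p => f p.1), Pfin,
    Finset.sum_sigma]
  refine Finset.sum_congr rfl fun k _ => ?_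
  have h : ∀ n : ℕ, ∑ _s ∈ Finset.Icc 1 n, f k = (n : ℝ) * f k := fun n => by
    rw [Finset.sum_const, Nat.card_Icc]; simp [nsmul_eq_mul]
  exact h (L k)

lemma card_filter_totG (m : ℕ) (L : ℕ → ℕ) (a : ℕ) :
    ((Fintype.piFinset (tIdx m L)).filter (fun g => totG m L g = a)).card
      = ∑ j ∈ Finset.Nat.antidiagonalTuple m a, FNorm m L (extN m j) := by
  rw [← polyId]
  have h1 : ∏ k ∈ Finset.Icc 1 m, hGeom k ^ L k = ∏ p : ↥(Pfin m L), hGeom p.1.1 :=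
    (prod_Pfin m L hGeom).symm
  have h2 : ∏ p : ↥(Pfin m L), hGeom p.1.1
      = ∑ g ∈ Fintype.piFinset (tIdx m L), Polynomial.X ^ totG m L g := by
    have h := Finset.prod_univ_sum (tIdx m L) (fun (_ : ↥(Pfin m L)) (v : ℕ) => (Polynomial.X : Polynomial ℕ) ^ v)
    have h2 : ∏ p : ↥(Pfin m L), hGeom p.1.1
        = ∑ g ∈ Fintype.piFinset (tIdx m L), ∏ p : ↥(Pfin m L), (Polynomial.X : Polynomial ℕ) ^ g p := h
    rw [h2]
    exact Finset.sum_congr rfl fun g _ => Finset.prod_pow_eq_pow_sum _ _ _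
  rw [h1, h2, Polynomial.finset_sum_coeff]
  rw [Finset.card_filter]
  refine Finset.sum_congr rfl fun g _ => ?_
  rw [Polynomial.coeff_X_pow]
  by_cases h : totG m L g = a
  · rw [if_pos h, if_pos h.symm]
  · rw [if_neg h, if_neg (fun hh => h hh.symm)]

lemma A1gen {ι : Type*} [Fintype ι] [DecidableEq ι] (t : ι → Finset ℕ) (p : ι) :
    ∑ g ∈ Fintype.piFinset t, (g p : ℝ)
      = (∑ v ∈ t p, (v : ℝ)) * ∏ q ∈ Finset.univ.erase p, ((t q).card : ℝ) := by
  have h : ∀ g : ι → ℕ, (g p : ℝ) = ∏ i, (if i = p then (g i : ℝ) else 1) := by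
    intro g; rw [Finset.prod_ite_eq' Finset.univ p (fun i => (g i : ℝ)), if_pos (Finset.mem_univ p)]
  simp only [h]
  rw [← Finset.prod_univ_sum t (fun i v => if i = p then (v : ℝ) else 1)]
  rw [← Finset.mul_prod_erase Finset.univ _ (Finset.mem_univ p)]
  simp only [if_pos rfl]
  congr 1
  refine Finset.prod_congr rfl fun q hq => ?_
  rw [Finset.mem_erase] at hq
  simp [hq.1]

lemma A2gen {ι : Type*} [Fintype ι] [DecidableEq ι] (t : ι → Finset ℕ) (p q : ι) (hpq : p ≠ q) :
    ∑ g ∈ Fintype.piFinset t, (g p : ℝ) * (g q : ℝ)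
      = (∑ v ∈ t p, (v : ℝ)) * (∑ v ∈ t q, (v : ℝ)) *
        ∏ r ∈ (Finset.univ.erase p).erase q, ((t r).card : ℝ) := by
  have h : ∀ g : ι → ℕ, (g p : ℝ) * (g q : ℝ)
      = ∏ i, (if i = p then (g i : ℝ) else if i = q then (g i : ℝ) else 1) := by
    intro g
    rw [← Finset.mul_prod_erase Finset.univ _ (Finset.mem_univ p),
      ← Finset.mul_prod_erase _ _ (Finset.mem_erase.2 ⟨fun h => hpq h.symm, Finset.mem_univ q⟩)]
    rw [if_pos rfl, if_neg (fun h => hpq h.symm), if_pos rfl, ← mul_assoc]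
    rw [Finset.prod_eq_one (fun r hr => ?_), mul_one]
    simp only [Finset.mem_erase] at hr
    rw [if_neg hr.2.1, if_neg hr.1]
  simp only [h]
  rw [← Finset.prod_univ_sum t (fun i v => if i = p then (v : ℝ) else if i = q then (v : ℝ) else 1)]
  rw [← Finset.mul_prod_erase Finset.univ _ (Finset.mem_univ p),
    ← Finset.mul_prod_erase _ _ (Finset.mem_erase.2 ⟨fun h => hpq h.symm, Finset.mem_univ q⟩)]
  simp only [if_pos rfl, if_neg (fun h => hpq h.symm : ¬ q = p)]
  rw [← mul_assoc]
  congr 1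
  refine Finset.prod_congr rfl fun r hr => ?_
  simp only [Finset.mem_erase] at hr
  simp [hr.1, hr.2.1]

lemma A2dgen {ι : Type*} [Fintype ι] [DecidableEq ι] (t : ι → Finset ℕ) (p : ι) :
    ∑ g ∈ Fintype.piFinset t, (g p : ℝ) * (g p : ℝ)
      = (∑ v ∈ t p, (v : ℝ) * v) * ∏ q ∈ Finset.univ.erase p, ((t q).card : ℝ) := by
  have h : ∀ g : ι → ℕ, (g p : ℝ) * (g p : ℝ) = ∏ i, (if i = p then (g i : ℝ) * g i else 1) := by
    intro g
    rw [Finset.prod_ite_eq' Finset.univ p (fun i => (g i : ℝ) * g i), if_pos (Finset.mem_univ p)]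
  simp only [h]
  rw [← Finset.prod_univ_sum t (fun i v => if i = p then (v : ℝ) * v else 1)]
  rw [← Finset.mul_prod_erase Finset.univ _ (Finset.mem_univ p)]
  simp only [if_pos rfl]
  congr 1
  refine Finset.prod_congr rfl fun q hq => ?_
  rw [Finset.mem_erase] at hq
  simp [hq.1]

lemma sumv (k : ℕ) : ∑ v ∈ Finset.range (k+1), (v : ℝ) = k * (k + 1) / 2 := by
  induction k with
  | zero => simp
  | succ k ih => rw [Finset.sum_range_succ, ih]; push_cast; ring

lemma sumv2 (k : ℕ) : ∑ v ∈ Finset.range (k+1), (v : ℝ) * v = k * (k + 1) * (2 * k + 1) / 6 := by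
  induction k with
  | zero => simp
  | succ k ih => rw [Finset.sum_range_succ, ih]; push_cast; ring

lemma harith (a b E : ℝ) (ha : a + 1 ≠ 0) (hb : b + 1 ≠ 0) (hE : E ≠ 0) :
    a * (a + 1) / 2 * (b * (b + 1) / 2) * E * ((a + 1) * ((b + 1) * E))⁻¹ - a / 2 * (b / 2) = 0 := by
  field_simp
  ring

/-- For the total sum `S_L` of independent uniform letters, the supernomial
probabilities, the mean `(1/2) Σ i L_i`, and the variance `(1/12) Σ i(i+2) L_i`. -/
theorem statement_4
    {Ω : Type*} [MeasureSpace Ω] [IsProbabilityMeasure (volume : Measure Ω)]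
    (m : ℕ) (hm : 1 ≤ m) (L : ℕ → ℕ) (hL : ∀ i ∈ Finset.Icc 1 m, 0 < L i)
    (X : Ω → ℕ → ℕ → ℕ) (hXm : Measurable X)
    (hX : ∀ x : ℕ → ℕ → ℕ,
      volume {ω | ∀ k ∈ Finset.Icc 1 m, ∀ jj ∈ Finset.Icc 1 (L k), X ω k jj = x k jj} =
        ∏ k ∈ Finset.Icc 1 m, ∏ jj ∈ Finset.Icc 1 (L k),
          (if x k jj ≤ k then ENNReal.ofReal (1 / ((k : ℝ) + 1)) else 0))
    (S : Ω → ℕ)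
    (hS : S = fun ω => ∑ k ∈ Finset.Icc 1 m, ∑ jj ∈ Finset.Icc 1 (L k), X ω k jj) :
    (∀ a : ℕ, volume {ω | S ω = a} =
      ENNReal.ofReal
        ((∑ j ∈ Finset.Nat.antidiagonalTuple m a, (FNorm m L (extN m j) : ℝ)) /
          ∏ i ∈ Finset.Icc 1 m, ((i : ℝ) + 1) ^ L i)) ∧
    ((∫ ω, (S ω : ℝ)) = (1 / 2) * ∑ i ∈ Finset.Icc 1 m, (i : ℝ) * (L i : ℝ)) ∧
    (covar (fun ω => (S ω : ℝ)) (fun ω => (S ω : ℝ)) =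
      (1 / 12) * ∑ i ∈ Finset.Icc 1 m, (i : ℝ) * ((i : ℝ) + 2) * (L i : ℝ)) := by
  classical
  -- notation
  set G : Finset (↥(Pfin m L) → ℕ) := Fintype.piFinset (tIdx m L) with hGdef
  set D : ℝ := ∏ k ∈ Finset.Icc 1 m, ((k : ℝ) + 1) ^ L k with hDdef
  have hD_pos : 0 < D := Finset.prod_pos (fun k _ => pow_pos (by positivity) _)
  set W : ENNReal := ∏ k ∈ Finset.Icc 1 m, (ENNReal.ofReal (1 / ((k : ℝ) + 1))) ^ L k with hWdef
  -- extension of g to full pattern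
  let xg : (↥(Pfin m L) → ℕ) → ℕ → ℕ → ℕ := fun g k j =>
    if h : (⟨k, j⟩ : (_ : ℕ) × ℕ) ∈ Pfin m L then g ⟨⟨k, j⟩, h⟩ else 0
  let A : (↥(Pfin m L) → ℕ) → Set Ω := fun g =>
    {ω | ∀ k ∈ Finset.Icc 1 m, ∀ jj ∈ Finset.Icc 1 (L k), X ω k jj = xg g k jj}
  have hxg : ∀ (g : ↥(Pfin m L) → ℕ) (p : ↥(Pfin m L)), xg g p.1.1 p.1.2 = g p :=
    fun g p => dif_pos p.2
  have hmemP : ∀ (k jj : ℕ), k ∈ Finset.Icc 1 m → jj ∈ Finset.Icc 1 (L k) →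
      (⟨k, jj⟩ : (_ : ℕ) × ℕ) ∈ Pfin m L := fun k jj hk hjj => Finset.mem_sigma.2 ⟨hk, hjj⟩
  have hmemG : ∀ g ∈ G, ∀ (p : ↥(Pfin m L)), g p ≤ p.1.1 := by
    intro g hg p
    have := Fintype.mem_piFinset.1 hg p
    simpa [tIdx, Nat.lt_succ_iff] using this
  -- volumes
  have hXA : ∀ g, volume (A g) =
      ∏ k ∈ Finset.Icc 1 m, ∏ jj ∈ Finset.Icc 1 (L k),
        (if xg g k jj ≤ k then ENNReal.ofReal (1 / ((k : ℝ) + 1)) else 0) := fun g => hX (xg g)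
  have hvolg : ∀ g ∈ G, volume (A g) = W := by
    intro g hg
    rw [hXA g, hWdef]
    refine Finset.prod_congr rfl fun k hk => ?_
    have h : ∀ jj ∈ Finset.Icc 1 (L k),
        (if xg g k jj ≤ k then ENNReal.ofReal (1 / ((k : ℝ) + 1)) else 0)
          = ENNReal.ofReal (1 / ((k : ℝ) + 1)) := by
      intro jj hjj
      have hmem := hmemP k jj hk hjj
      have : xg g k jj = g ⟨⟨k, jj⟩, hmem⟩ := dif_pos hmem
      rw [this, if_pos (hmemG g hg ⟨⟨k, jj⟩, hmem⟩)]
    rw [Finset.prod_congr rfl h, Finset.prod_const, Nat.card_Icc]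
    simp
  have hXkj : ∀ k jj, Measurable fun ω => X ω k jj :=
    fun k jj => (measurable_pi_apply jj).comp ((measurable_pi_apply k).comp hXm)
  have hAmeas : ∀ g, MeasurableSet (A g) := by
    intro g
    have h : A g = ⋂ k ∈ (Finset.Icc 1 m : Finset ℕ), ⋂ jj ∈ (Finset.Icc 1 (L k) : Finset ℕ),
        (fun ω => X ω k jj) ⁻¹' {xg g k jj} := by
      ext ω; simp only [A, Set.mem_setOf_eq, Set.mem_iInter, Set.mem_preimage,
        Set.mem_singleton_iff, Finset.mem_coe]
    rw [h]
    exact MeasurableSet.biInter (Finset.Icc 1 m).countable_toSet fun k _ =>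
      MeasurableSet.biInter (Finset.Icc 1 (L k)).countable_toSet fun jj _ =>
        hXkj k jj (measurableSet_singleton _)
  have hdisj : ∀ g g' : ↥(Pfin m L) → ℕ, g ≠ g' → Disjoint (A g) (A g') := by
    intro g g' hne
    rw [Set.disjoint_left]
    intro ω hw hw'
    obtain ⟨p, hp⟩ := Function.ne_iff.1 hne
    have hmem := Finset.mem_sigma.1 p.2
    have h1 : X ω p.1.1 p.1.2 = xg g p.1.1 p.1.2 := hw p.1.1 hmem.1 p.1.2 hmem.2
    have h2 : X ω p.1.1 p.1.2 = xg g' p.1.1 p.1.2 := hw' p.1.1 hmem.1 p.1.2 hmem.2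
    rw [hxg] at h1 h2
    exact hp (h1 ▸ h2)
  have hSA : ∀ g, ∀ ω ∈ A g, S ω = totG m L g := by
    intro g ω hω
    simp only [hS]
    have h1 : ∑ k ∈ Finset.Icc 1 m, ∑ jj ∈ Finset.Icc 1 (L k), X ω k jj
        = ∑ k ∈ Finset.Icc 1 m, ∑ jj ∈ Finset.Icc 1 (L k), xg g k jj :=
      Finset.sum_congr rfl fun k hk => Finset.sum_congr rfl fun jj hjj => hω k hk jj hjj
    have h2 : ∑ k ∈ Finset.Icc 1 m, ∑ jj ∈ Finset.Icc 1 (L k), xg g k jj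
        = ∑ p ∈ Pfin m L, xg g p.1 p.2 :=
      (Finset.sum_sigma (Finset.Icc 1 m) (fun k => Finset.Icc 1 (L k))
        (fun p => xg g p.1 p.2)).symm
    have h3 : ∑ p ∈ Pfin m L, xg g p.1 p.2 = totG m L g := by
      rw [← Finset.sum_attach (Pfin m L) (fun p => xg g p.1 p.2)]
      rw [totG, Finset.univ_eq_attach]
      exact Finset.sum_congr rfl fun p _ => hxg g p
    rw [h1, h2, h3]
  -- total mass
  have hcardG : (G.card : ENNReal) * W = 1 := by
    have hcard : G.card = ∏ p : ↥(Pfin m L), (p.1.1 + 1) := by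
      rw [hGdef, Fintype.card_piFinset]
      exact Finset.prod_congr rfl fun p _ => by simp [tIdx]
    have hWp : W = ∏ p : ↥(Pfin m L), ENNReal.ofReal (1 / ((p.1.1 : ℝ) + 1)) := by
      rw [hWdef, ← prod_Pfin m L (fun k => ENNReal.ofReal (1 / ((k : ℝ) + 1)))]
    rw [hcard, hWp, Nat.cast_prod, ← Finset.prod_mul_distrib]
    rw [Finset.prod_eq_one]
    intro p _
    have hk : ((p.1.1 + 1 : ℕ) : ENNReal) * ENNReal.ofReal (1 / ((p.1.1 : ℝ) + 1)) = 1 := by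
      rw [one_div, ENNReal.ofReal_inv_of_pos (by positivity)]
      have : ENNReal.ofReal ((p.1.1 : ℝ) + 1) = ((p.1.1 + 1 : ℕ) : ENNReal) := by
        rw [show ((p.1.1 : ℝ) + 1) = ((p.1.1 + 1 : ℕ) : ℝ) by push_cast; ring, ENNReal.ofReal_natCast]
      rw [this]
      exact ENNReal.mul_inv_cancel (by simp) (by simp)
    exact hk
  have hsumvol : ∑ g ∈ G, volume (A g) = 1 := by
    rw [Finset.sum_congr rfl hvolg, Finset.sum_const, nsmul_eq_mul, hcardG]
  have hUmeas : MeasurableSet (⋃ g ∈ G, A g) :=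
    (Finset.measurableSet_biUnion G fun g _ => hAmeas g)
  have hU : volume (⋃ g ∈ G, A g) = 1 := by
    rw [measure_biUnion_finset (fun g _ g' _ hne => hdisj g g' hne) (fun g _ => hAmeas g), hsumvol]
  have hUc : volume (⋃ g ∈ G, A g)ᶜ = 0 := by
    rw [measure_compl hUmeas (measure_ne_top _ _), hU, measure_univ, tsub_self]
  have hWne : W ≠ ⊤ := by
    rw [hWdef]
    refine (ENNReal.prod_lt_top ?_).ne
    intro k _
    exact ENNReal.pow_lt_top ENNReal.ofReal_lt_top
  have hWto : W.toReal = D⁻¹ := by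
    rw [hWdef, ENNReal.toReal_prod, hDdef, ← Finset.prod_inv_distrib]
    refine Finset.prod_congr rfl fun k _ => ?_
    rw [ENNReal.toReal_pow, ENNReal.toReal_ofReal (by positivity), ← inv_pow, one_div]
  have hWD : W = ENNReal.ofReal D⁻¹ := by rw [← hWto, ENNReal.ofReal_toReal hWne]
  have hSmeas : Measurable S := by
    rw [hS]
    exact Finset.measurable_sum _ fun k _ => Finset.measurable_sum _ fun jj _ => hXkj k jj
  have part1 : ∀ a : ℕ, volume {ω | S ω = a} = ENNReal.ofReal
      ((∑ j ∈ Finset.Nat.antidiagonalTuple m a, (FNorm m L (extN m j) : ℝ)) / D) := by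
    intro a
    have hmSa : MeasurableSet {ω | S ω = a} := hSmeas (measurableSet_singleton a)
    have h1 : volume {ω | S ω = a} = volume ({ω | S ω = a} ∩ ⋃ g ∈ G, A g) :=
      (measure_inter_conull hUc).symm
    have h2 : {ω | S ω = a} ∩ ⋃ g ∈ G, A g = ⋃ g ∈ G, ({ω | S ω = a} ∩ A g) :=
      Set.inter_iUnion₂ _ _
    have h3 : volume (⋃ g ∈ G, ({ω | S ω = a} ∩ A g)) = ∑ g ∈ G, volume ({ω | S ω = a} ∩ A g) :=
      measure_biUnion_finset
        (fun g _ g' hg' hne => (hdisj g g' hne).mono Set.inter_subset_right Set.inter_subset_right)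
        (fun g _ => hmSa.inter (hAmeas g))
    have h4 : ∀ g ∈ G, volume ({ω | S ω = a} ∩ A g) = if totG m L g = a then W else 0 := by
      intro g hg
      by_cases h : totG m L g = a
      · rw [if_pos h, ← hvolg g hg]
        congr 1
        refine Set.inter_eq_self_of_subset_right ?_
        intro ω hω
        exact (hSA g ω hω).trans h
      · rw [if_neg h]
        have he : {ω | S ω = a} ∩ A g = ∅ :=
          Set.eq_empty_iff_forall_notMem.2 fun ω hω => h (((hSA g ω hω.2).symm).trans hω.1)
        rw [he, measure_empty]
    rw [h1, h2, h3, Finset.sum_congr rfl h4, ← Finset.sum_filter, Finset.sum_const,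
      card_filter_totG m L a, nsmul_eq_mul, hWD, ← ENNReal.ofReal_natCast,
      ← ENNReal.ofReal_mul (Nat.cast_nonneg _)]
    congr 1
    rw [div_eq_mul_inv]
    congr 1
    push_cast
    rfl
  -- general expectation formula
  have key2 : ∀ φ : ℕ → ℝ, (∫ ω, φ (S ω)) = ∑ g ∈ G, φ (totG m L g) * D⁻¹ := by
    intro φ
    have hInt : ∀ g ∈ G, Integrable ((A g).indicator (fun _ => φ (totG m L g))) volume := by
      intro g _
      rw [integrable_indicator_iff (hAmeas g)]
      exact integrableOn_const (measure_lt_top _ _).ne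
    have hUae : ∀ᵐ ω ∂(volume : Measure Ω), ω ∈ ⋃ g ∈ G, A g := by
      rw [ae_iff]
      exact hUc
    have hae : (fun ω => φ (S ω)) =ᵐ[volume]
        (fun ω => ∑ g ∈ G, (A g).indicator (fun _ => φ (totG m L g)) ω) := by
      filter_upwards [hUae] with ω hω
      rw [Set.mem_iUnion₂] at hω
      obtain ⟨g, hgG, hgA⟩ := hω
      rw [Finset.sum_eq_single g]
      · rw [Set.indicator_of_mem hgA, hSA g ω hgA]
      · intro g' _ hne
        exact Set.indicator_of_notMem
          (fun hmem => Set.disjoint_left.1 (hdisj g' g hne) hmem hgA) _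
      · intro hg
        exact absurd hgG hg
    rw [integral_congr_ae hae, integral_finset_sum G hInt]
    refine Finset.sum_congr rfl fun g hg => ?_
    rw [integral_indicator_const _ (hAmeas g), measureReal_def, hvolg g hg, hWto, smul_eq_mul, mul_comm]
  -- per-coordinate facts
  have hcardtI : ∀ q : ↥(Pfin m L), ((tIdx m L q).card : ℝ) = (q.1.1 : ℝ) + 1 := by
    intro q
    simp [tIdx]
  have hDprod : D = ∏ p : ↥(Pfin m L), ((p.1.1 : ℝ) + 1) := by
    rw [hDdef, ← prod_Pfin m L (fun k => (k : ℝ) + 1)]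
  have hcne : ∀ p : ↥(Pfin m L), ((p.1.1 : ℝ) + 1) ≠ 0 := fun p => by positivity
  have hEp : ∀ p : ↥(Pfin m L),
      (∏ q ∈ Finset.univ.erase p, ((tIdx m L q).card : ℝ)) * D⁻¹ = ((p.1.1 : ℝ) + 1)⁻¹ := by
    intro p
    have hpc : ∏ q ∈ Finset.univ.erase p, ((tIdx m L q).card : ℝ)
        = ∏ q ∈ Finset.univ.erase p, ((q.1.1 : ℝ) + 1) :=
      Finset.prod_congr rfl fun q _ => hcardtI q
    have hsplit : D = ((p.1.1 : ℝ) + 1) * ∏ q ∈ Finset.univ.erase p, ((q.1.1 : ℝ) + 1) := by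
      rw [hDprod]
      exact (Finset.mul_prod_erase Finset.univ _ (Finset.mem_univ p)).symm
    have hE : (∏ q ∈ Finset.univ.erase p, ((q.1.1 : ℝ) + 1)) ≠ 0 :=
      Finset.prod_ne_zero_iff.2 fun q _ => hcne q
    rw [hpc, hsplit, mul_inv, mul_comm (((p.1.1 : ℝ) + 1))⁻¹, ← mul_assoc,
      mul_inv_cancel₀ hE, one_mul]
  have hSumV : ∀ p : ↥(Pfin m L),
      ∑ v ∈ tIdx m L p, (v : ℝ) = (p.1.1 : ℝ) * ((p.1.1 : ℝ) + 1) / 2 := fun p => sumv p.1.1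
  have hSumV2 : ∀ p : ↥(Pfin m L),
      ∑ v ∈ tIdx m L p, (v : ℝ) * v
        = (p.1.1 : ℝ) * ((p.1.1 : ℝ) + 1) * (2 * (p.1.1 : ℝ) + 1) / 6 := fun p => sumv2 p.1.1
  have hsumtot : ∑ g ∈ G, (totG m L g : ℝ) * D⁻¹ = ∑ p : ↥(Pfin m L), (p.1.1 : ℝ) / 2 := by
    have h1 : ∀ g : ↥(Pfin m L) → ℕ, (totG m L g : ℝ) = ∑ p : ↥(Pfin m L), (g p : ℝ) := by
      intro g
      rw [totG]
      push_cast
      rfl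
    calc ∑ g ∈ G, (totG m L g : ℝ) * D⁻¹
        = (∑ g ∈ G, ∑ p : ↥(Pfin m L), (g p : ℝ)) * D⁻¹ := by
          rw [Finset.sum_mul]
          exact Finset.sum_congr rfl fun g _ => by rw [h1]
      _ = ∑ p : ↥(Pfin m L), (∑ g ∈ G, (g p : ℝ)) * D⁻¹ := by
          rw [Finset.sum_comm, Finset.sum_mul]
      _ = ∑ p : ↥(Pfin m L), (p.1.1 : ℝ) / 2 := by
          refine Finset.sum_congr rfl fun p _ => ?_
          rw [hGdef, A1gen (tIdx m L) p, mul_assoc, hEp p, hSumV p]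
          have := hcne p
          field_simp
  have part2 : (∫ ω, (S ω : ℝ)) = (1 / 2) * ∑ i ∈ Finset.Icc 1 m, (i : ℝ) * (L i : ℝ) := by
    rw [key2 (fun n => (n : ℝ)), hsumtot, sum_Pfin m L (fun k => (k : ℝ) / 2), Finset.mul_sum]
    exact Finset.sum_congr rfl fun i _ => by ring
  refine ⟨part1, part2, ?_⟩
  -- variance
  have hmed : (∫ ω, (S ω : ℝ)) = ∑ p : ↥(Pfin m L), (p.1.1 : ℝ) / 2 := by
    rw [key2 (fun n => (n : ℝ)), hsumtot]
  set μ0 : ℝ := ∑ p : ↥(Pfin m L), (p.1.1 : ℝ) / 2 with hμ0def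
  have hcov : covar (fun ω => (S ω : ℝ)) (fun ω => (S ω : ℝ))
      = ∫ ω, ((S ω : ℝ) - μ0) * ((S ω : ℝ) - μ0) := by
    simp only [covar, hmed]
  rw [hcov, key2 (fun n => ((n : ℝ) - μ0) * ((n : ℝ) - μ0))]
  have hconst : ∑ _g ∈ G, D⁻¹ = (1 : ℝ) := by
    rw [Finset.sum_const, nsmul_eq_mul]
    have hcG : (G.card : ℝ) = D := by
      rw [hGdef, Fintype.card_piFinset, Nat.cast_prod, hDprod]
      exact Finset.prod_congr rfl fun p _ => by rw [← hcardtI p]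
    rw [hcG, mul_inv_cancel₀ hD_pos.ne']
  have htotcast : ∀ g : ↥(Pfin m L) → ℕ, (totG m L g : ℝ) = ∑ p : ↥(Pfin m L), (g p : ℝ) := by
    intro g
    rw [totG]
    push_cast
    rfl
  have hQ : ∑ g ∈ G, (totG m L g : ℝ) * (totG m L g : ℝ) * D⁻¹
      = ∑ p : ↥(Pfin m L), ∑ q : ↥(Pfin m L), (∑ g ∈ G, (g p : ℝ) * (g q : ℝ)) * D⁻¹ := by
    have h1 : ∀ g ∈ G, (totG m L g : ℝ) * (totG m L g : ℝ) * D⁻¹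
        = ∑ p : ↥(Pfin m L), ∑ q : ↥(Pfin m L), (g p : ℝ) * (g q : ℝ) * D⁻¹ := by
      intro g _
      rw [htotcast, Finset.sum_mul_sum]
      rw [Finset.sum_mul]
      refine Finset.sum_congr rfl fun p _ => ?_
      rw [Finset.sum_mul]
    rw [Finset.sum_congr rfl h1, Finset.sum_comm]
    refine Finset.sum_congr rfl fun p _ => ?_
    rw [Finset.sum_comm]
    refine Finset.sum_congr rfl fun q _ => ?_
    rw [Finset.sum_mul]
  have hdiag : ∀ p : ↥(Pfin m L),
      (∑ g ∈ G, (g p : ℝ) * (g p : ℝ)) * D⁻¹ - ((p.1.1 : ℝ) / 2) * ((p.1.1 : ℝ) / 2)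
        = (p.1.1 : ℝ) * ((p.1.1 : ℝ) + 2) / 12 := by
    intro p
    rw [hGdef, A2dgen (tIdx m L) p, mul_assoc, hEp p, hSumV2 p]
    have hc := hcne p
    field_simp
    ring
  have hoff : ∀ p q : ↥(Pfin m L), p ≠ q →
      (∑ g ∈ G, (g p : ℝ) * (g q : ℝ)) * D⁻¹ - ((p.1.1 : ℝ) / 2) * ((q.1.1 : ℝ) / 2) = 0 := by
    intro p q hpq
    rw [hGdef, A2gen (tIdx m L) p q hpq]
    have hpc : ∏ r ∈ (Finset.univ.erase p).erase q, ((tIdx m L r).card : ℝ)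
        = ∏ r ∈ (Finset.univ.erase p).erase q, ((r.1.1 : ℝ) + 1) :=
      Finset.prod_congr rfl fun r _ => hcardtI r
    have hqmem : q ∈ Finset.univ.erase p := Finset.mem_erase.2 ⟨Ne.symm hpq, Finset.mem_univ q⟩
    have hsplit : D = ((p.1.1 : ℝ) + 1) *
        (((q.1.1 : ℝ) + 1) * ∏ r ∈ (Finset.univ.erase p).erase q, ((r.1.1 : ℝ) + 1)) := by
      rw [hDprod, ← Finset.mul_prod_erase Finset.univ _ (Finset.mem_univ p),
        ← Finset.mul_prod_erase (Finset.univ.erase p) _ hqmem]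
    have hE2 : (∏ r ∈ (Finset.univ.erase p).erase q, ((r.1.1 : ℝ) + 1)) ≠ 0 :=
      Finset.prod_ne_zero_iff.2 fun r _ => hcne r
    rw [hpc, hSumV p, hSumV q, hsplit]
    exact harith _ _ _ (hcne p) (hcne q) hE2
  have hμ0sq : μ0 * μ0 = ∑ p : ↥(Pfin m L), ∑ q : ↥(Pfin m L),
      ((p.1.1 : ℝ) / 2) * ((q.1.1 : ℝ) / 2) := by
    rw [hμ0def]
    exact Finset.sum_mul_sum _ _ _ _
  have hstep : ∀ p : ↥(Pfin m L),
      ∑ q : ↥(Pfin m L), ((∑ g ∈ G, (g p : ℝ) * (g q : ℝ)) * D⁻¹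
        - ((p.1.1 : ℝ) / 2) * ((q.1.1 : ℝ) / 2)) = (p.1.1 : ℝ) * ((p.1.1 : ℝ) + 2) / 12 := by
    intro p
    rw [Finset.sum_eq_single p]
    · exact hdiag p
    · intro q _ hqp
      exact hoff p q (Ne.symm hqp)
    · intro h
      exact absurd (Finset.mem_univ p) h
  have hexp : ∀ g ∈ G, ((totG m L g : ℝ) - μ0) * ((totG m L g : ℝ) - μ0) * D⁻¹
      = (totG m L g : ℝ) * (totG m L g : ℝ) * D⁻¹
        - (2 * μ0) * ((totG m L g : ℝ) * D⁻¹) + (μ0 * μ0) * D⁻¹ := fun g _ => by ring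
  rw [Finset.sum_congr rfl hexp, Finset.sum_add_distrib, Finset.sum_sub_distrib,
    ← Finset.mul_sum, ← Finset.mul_sum, hsumtot, hconst, mul_one, hQ]
  rw [show (∑ p : ↥(Pfin m L), ∑ q : ↥(Pfin m L), (∑ g ∈ G, (g p : ℝ) * (g q : ℝ)) * D⁻¹)
      - 2 * μ0 * μ0 + μ0 * μ0
      = (∑ p : ↥(Pfin m L), ∑ q : ↥(Pfin m L), (∑ g ∈ G, (g p : ℝ) * (g q : ℝ)) * D⁻¹)
        - μ0 * μ0 from by ring]
  rw [hμ0sq, ← Finset.sum_sub_distrib]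
  rw [Finset.sum_congr rfl fun p _ => (Finset.sum_sub_distrib _ _).symm]
  rw [Finset.sum_congr rfl fun p _ => hstep p]
  rw [sum_Pfin m L (fun k => (k : ℝ) * ((k : ℝ) + 2) / 12), Finset.mul_sum]
  exact Finset.sum_congr rfl fun i _ => by ring
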